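/- Let c > 0, λ > 0, μ > 0 with κ'(0) = c − λ/μ > 0, set γ = μ − λ/c > 0 and ρ = λ/(cμ) ∈ (0,1), and let W(x) = (1/(c(1−ρ)))(1 − ρ e^{−γx}) be the zero scale function of the Cramér–Lundberg process with exponential claims. Define W̄(x) = ∫₀^x W and W^{*2}(x) = ∫₀^x W(x−y)W(y)dy. Then (κ''(0)/(2κ'(0))) W(x) + κ'(0) W^{*2}(x) − W̄(x) = (ρ/(c²γ)) e^{−γx} (λx + c) for all x ≥ 0, where κ''(0) = 2λ/μ². Moreover this function attains its maximum over [0,∞) at x* = (2 − 1/ρ)/γ when ρ > 1/2. -/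

import Mathlib

open Real Set

set_option maxHeartbeats 1000000

/-- Conditional expected time to ruin for the Cramér–Lundberg model with exponential
claims, and its maximizer when ρ > 1/2. -/
theorem cl_conditional_ruin_time (c lam μ : ℝ) (hc : 0 < c) (hlam : 0 < lam) (hμ : 0 < μ)
    (hnet : 0 < c - lam / μ) :
    let γ := μ - lam / c
    let ρ := lam / (c * μ)
    let W : ℝ → ℝ := fun x => (1 / (c * (1 - ρ))) * (1 - ρ * Real.exp (-(γ * x)))
    let Wbar : ℝ → ℝ := fun x => ∫ y in (0 : ℝ)..x, W y
    let Wconv2 : ℝ → ℝ := fun x => ∫ y in (0 : ℝ)..x, W (x - y) * W y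
    let f : ℝ → ℝ := fun x =>
      (2 * lam / μ ^ 2) / (2 * (c - lam / μ)) * W x + (c - lam / μ) * Wconv2 x - Wbar x
    (∀ x : ℝ, 0 ≤ x → f x = ρ / (c ^ 2 * γ) * Real.exp (-(γ * x)) * (lam * x + c)) ∧
      (1 / 2 < ρ → IsMaxOn f (Set.Ici (0 : ℝ)) ((2 - 1 / ρ) / γ)) := by
  intro γ ρ W Wbar Wconv2 f
  have hclam : lam < c * μ := by
    have h1 : lam / μ < c := by linarith
    have := (div_lt_iff₀ hμ).mp h1
    linarith
  have hγ : 0 < γ := by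
    have h1 : lam / c < μ := by
      rw [div_lt_iff₀ hc]; nlinarith
    show 0 < μ - lam / c
    linarith
  have hρ0 : 0 < ρ := div_pos hlam (mul_pos hc hμ)
  have hρ1 : ρ < 1 := by
    rw [div_lt_one (mul_pos hc hμ)]; exact hclam
  have hA : c * (1 - ρ) = c - lam / μ := by
    show c * (1 - lam / (c * μ)) = c - lam / μ
    field_simp
  have hγρ : γ = μ * (1 - ρ) := by
    show μ - lam / c = μ * (1 - lam / (c * μ))
    field_simp
  set A : ℝ := 1 / (c * (1 - ρ)) with hAdef
  -- formula for f for all x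
  have hf : ∀ x : ℝ, f x = ρ / (c ^ 2 * γ) * Real.exp (-(γ * x)) * (lam * x + c) := by
    intro x
    -- Wbar
    have hWbar : Wbar x = A * x + A * ρ / γ * Real.exp (-(γ * x)) - A * ρ / γ := by
      have hder : ∀ y ∈ Set.uIcc (0:ℝ) x,
          HasDerivAt (fun y => A * y + A * ρ / γ * Real.exp (-(γ * y))) (W y) y := by
        intro y _
        have h1 : HasDerivAt (fun y : ℝ => -(γ * y)) (-γ) y := by
          simpa using ((hasDerivAt_id y).const_mul γ).fun_neg
        have h2 := h1.exp
        have h3 := (h2.const_mul (A * ρ / γ)).const_add (A * y)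
        have h4 : HasDerivAt (fun y : ℝ => A * y) A y := by
          simpa using (hasDerivAt_id y).const_mul A
        have := h4.fun_add (h2.const_mul (A * ρ / γ))
        refine this.congr_deriv (Eq.symm ?_)
        show A * (1 - ρ * Real.exp (-(γ * y))) = A + A * ρ / γ * (Real.exp (-(γ * y)) * -γ)
        field_simp
        ring
      have hint : IntervalIntegrable W MeasureTheory.volume 0 x := by
        apply Continuous.intervalIntegrable
        show Continuous fun y => A * (1 - ρ * Real.exp (-(γ * y)))
        fun_prop
      have := intervalIntegral.integral_eq_sub_of_hasDerivAt hder hint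
      show (∫ y in (0:ℝ)..x, W y) = _
      rw [this]
      simp only [mul_zero, neg_zero, Real.exp_zero, mul_one, zero_add]
    -- Wconv2
    have hWc : Wconv2 x = A ^ 2 * (x + ρ ^ 2 * Real.exp (-(γ * x)) * x
        - 2 * ρ / γ + 2 * ρ / γ * Real.exp (-(γ * x))) := by
      have hder : ∀ y ∈ Set.uIcc (0:ℝ) x,
          HasDerivAt (fun y => A ^ 2 * (y + ρ ^ 2 * Real.exp (-(γ * x)) * y
            - ρ / γ * Real.exp (γ * y - γ * x) + ρ / γ * Real.exp (-(γ * y))))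
            (W (x - y) * W y) y := by
        intro y _
        have h1 : HasDerivAt (fun y : ℝ => γ * y - γ * x) γ y := by
          simpa using ((hasDerivAt_id y).const_mul γ).sub_const (γ * x)
        have h2 : HasDerivAt (fun y : ℝ => -(γ * y)) (-γ) y := by
          simpa using ((hasDerivAt_id y).const_mul γ).fun_neg
        have h3 := h1.exp
        have h4 := h2.exp
        have h5 : HasDerivAt (fun y : ℝ => y + ρ ^ 2 * Real.exp (-(γ * x)) * y)
            (1 + ρ ^ 2 * Real.exp (-(γ * x))) y := by
          simpa using (hasDerivAt_id y).fun_add ((hasDerivAt_id y).const_mul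
            (ρ ^ 2 * Real.exp (-(γ * x))))
        have h6 := ((h5.fun_sub (h3.const_mul (ρ / γ))).fun_add (h4.const_mul (ρ / γ))).const_mul
          (A ^ 2)
        refine h6.congr_deriv (Eq.symm ?_)
        show (A * (1 - ρ * Real.exp (-(γ * (x - y))))) * (A * (1 - ρ * Real.exp (-(γ * y))))
          = A ^ 2 * (1 + ρ ^ 2 * Real.exp (-(γ * x)) - ρ / γ * (Real.exp (γ * y - γ * x) * γ)
            + ρ / γ * (Real.exp (-(γ * y)) * -γ))
        have e1 : Real.exp (-(γ * (x - y))) = Real.exp (γ * y - γ * x) := by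
          rw [show -(γ * (x - y)) = γ * y - γ * x by ring]
        have e2 : Real.exp (γ * y - γ * x) * Real.exp (-(γ * y)) = Real.exp (-(γ * x)) := by
          rw [← Real.exp_add]; ring_nf
        have hγ0 : γ ≠ 0 := hγ.ne'
        rw [e1,
          show ρ / γ * (Real.exp (γ * y - γ * x) * γ) = ρ * Real.exp (γ * y - γ * x) by
            field_simp [hγ0],
          show ρ / γ * (Real.exp (-(γ * y)) * -γ) = -(ρ * Real.exp (-(γ * y))) by
            field_simp [hγ0]]
        linear_combination (A ^ 2 * ρ ^ 2) * e2
      have hint : IntervalIntegrable (fun y => W (x - y) * W y) MeasureTheory.volume 0 x := by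
        apply Continuous.intervalIntegrable
        show Continuous fun y => (A * (1 - ρ * Real.exp (-(γ * (x - y))))) *
          (A * (1 - ρ * Real.exp (-(γ * y))))
        fun_prop
      have := intervalIntegral.integral_eq_sub_of_hasDerivAt hder hint
      show (∫ y in (0:ℝ)..x, W (x - y) * W y) = _
      rw [this]
      rw [show γ * x - γ * x = 0 by ring, show γ * 0 - γ * x = -(γ * x) by ring,
        show -(γ * (0:ℝ)) = 0 by ring]
      simp
      ring
    -- assemble
    show (2 * lam / μ ^ 2) / (2 * (c - lam / μ)) * (A * (1 - ρ * Real.exp (-(γ * x))))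
      + (c - lam / μ) * Wconv2 x - Wbar x = _
    rw [hWc, hWbar, ← hA]
    set E := Real.exp (-(γ * x)) with hE
    have h1ρ : (0:ℝ) < 1 - ρ := by linarith
    have hρdef : ρ = lam / (c * μ) := rfl
    have hcμ : c * μ ≠ 0 := (mul_pos hc hμ).ne'
    have hlamd : lam = ρ * (c * μ) := by rw [hρdef, div_mul_cancel₀ _ hcμ]
    rw [hAdef, hγρ, hlamd]
    field_simp [hc.ne', hμ.ne', h1ρ.ne']
    ring
  constructor
  · intro x _; exact hf x
  · intro hρhalf
    have h1ρ : (0:ℝ) < 1 - ρ := by linarith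
    have hρdef : ρ = lam / (c * μ) := rfl
    have hcμ : c * μ ≠ 0 := (mul_pos hc hμ).ne'
    have hlamd : lam = ρ * (c * μ) := by rw [hρdef, div_mul_cancel₀ _ hcμ]
    intro z hz
    simp only [Set.mem_setOf_eq]
    rw [hf z, hf ((2 - 1 / ρ) / γ)]
    set xs := (2 - 1 / ρ) / γ with hxs
    have hxs' : lam * xs + c = lam / γ := by
      rw [hxs, hlamd, hγρ]
      field_simp [hc.ne', hμ.ne', h1ρ.ne', hρ0.ne']
      ring
    have hcoef : 0 < ρ / (c ^ 2 * γ) := div_pos hρ0 (mul_pos (pow_pos hc 2) hγ)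
    set u := γ * (z - xs) with hu
    have hz' : lam * z + c = lam / γ * (1 + u) := by
      have h : lam * z + c = (lam * xs + c) + lam * (z - xs) := by ring
      rw [h, hxs', hu]
      field_simp
    have hez : Real.exp (-(γ * z)) = Real.exp (-(γ * xs)) * Real.exp (-u) := by
      rw [← Real.exp_add]
      congr 1
      rw [hu]; ring
    have key : Real.exp (-u) * (1 + u) ≤ 1 := by
      have h := Real.add_one_le_exp u
      have hp := Real.exp_pos (-u)
      calc Real.exp (-u) * (1 + u) ≤ Real.exp (-u) * Real.exp u := by
            apply mul_le_mul_of_nonneg_left _ hp.le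
            linarith
        _ = 1 := by rw [← Real.exp_add]; simp
    have hlg : 0 < lam / γ := div_pos hlam hγ
    have hmain : Real.exp (-(γ * z)) * (lam * z + c)
        ≤ Real.exp (-(γ * xs)) * (lam * xs + c) := by
      rw [hz', hez, hxs']
      calc Real.exp (-(γ * xs)) * Real.exp (-u) * (lam / γ * (1 + u))
          = (Real.exp (-(γ * xs)) * (lam / γ)) * (Real.exp (-u) * (1 + u)) := by ring
        _ ≤ (Real.exp (-(γ * xs)) * (lam / γ)) * 1 := by
            apply mul_le_mul_of_nonneg_left key
            positivity
        _ = Real.exp (-(γ * xs)) * (lam / γ) := by ring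
    calc ρ / (c ^ 2 * γ) * Real.exp (-(γ * z)) * (lam * z + c)
        = ρ / (c ^ 2 * γ) * (Real.exp (-(γ * z)) * (lam * z + c)) := by ring
      _ ≤ ρ / (c ^ 2 * γ) * (Real.exp (-(γ * xs)) * (lam * xs + c)) :=
          mul_le_mul_of_nonneg_left hmain hcoef.le
      _ = ρ / (c ^ 2 * γ) * Real.exp (-(γ * xs)) * (lam * xs + c) := by ring
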